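/- Every harmonic L²-function on ℝ × T³ (with the product Riemannian metric, T³ a flat 3-torus) is identically zero. -/

import Mathlib

open MeasureTheory

/-- The four coordinate directions of `ℝ × ℝ³`. -/
noncomputable def dir4 : Fin 4 → ℝ × EuclideanSpace ℝ (Fin 3) :=
  ![(1, 0), (0, EuclideanSpace.single 0 1), (0, EuclideanSpace.single 1 1),
    (0, EuclideanSpace.single 2 1)]

namespace HarmonicAux

open Submodule Metric Set Pointwise

noncomputable abbrev E3 := EuclideanSpace ℝ (Fin 3)

instance inst1 (b : Module.Basis (Fin 3) ℝ E3) : VAddCommClass E3 (span ℤ (Set.range b)) E3 :=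
  ⟨fun a g x => (add_left_comm a g x : a + (↑g + x) = ↑g + (a + x))⟩

instance inst3 (b : Module.Basis (Fin 3) ℝ E3) : VAddInvariantMeasure (span ℤ (Set.range b)) E3 volume :=
  ⟨fun g s _ => measure_preimage_add volume (g : E3) s⟩

instance inst2 (b : Module.Basis (Fin 3) ℝ E3) : MeasurableVAdd (span ℤ (Set.range b)) E3 :=
  { measurable_const_vadd := fun c => (measurable_const_add (c : E3)),
    measurable_vadd_const := fun x => ((continuous_subtype_val.add continuous_const).measurable :
      Measurable fun g : span ℤ (Set.range b) => (g : E3) + x) }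

/-- Translation invariance of integrals of periodic functions over the fundamental domain. -/
lemma integral_fd_add (b : Module.Basis (Fin 3) ℝ E3) (h : E3 → ℝ)
    (hper : ∀ (g : span ℤ (Set.range b)) (x : E3), h (g +ᵥ x) = h x)
    (v : E3) :
    ∫ x in ZSpan.fundamentalDomain b, h (x + v) = ∫ x in ZSpan.fundamentalDomain b, h x := by
  have hfd := ZSpan.isAddFundamentalDomain b (volume : Measure E3)
  have hfd2 : IsAddFundamentalDomain (span ℤ (Set.range b))
      (v +ᵥ ZSpan.fundamentalDomain b : Set E3) volume := hfd.vadd_of_comm v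
  have h1 : ∫ x in (v +ᵥ ZSpan.fundamentalDomain b : Set E3), h x
      = ∫ x in ZSpan.fundamentalDomain b, h (x + v) := by
    rw [show (v +ᵥ ZSpan.fundamentalDomain b : Set E3)
        = (v + ·) '' ZSpan.fundamentalDomain b from (Set.image_vadd).symm]
    rw [(MeasurePreserving.setIntegral_image_emb (measurePreserving_add_left volume v)
      (MeasurableEquiv.addLeft v).measurableEmbedding h _ : _)]
    simp [add_comm]
  have h2 := hfd2.setIntegral_eq hfd hper (f := h)
  rw [← h1, h2]

lemma integrableOn_fd (b : Module.Basis (Fin 3) ℝ E3) (g : E3 → ℝ) (hg : Continuous g) :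
    IntegrableOn g (ZSpan.fundamentalDomain b) volume := by
  have hc : IsCompact (closure (ZSpan.fundamentalDomain b)) :=
    (ZSpan.fundamentalDomain_isBounded b).isCompact_closure
  exact (hg.continuousOn.integrableOn_compact hc).mono_set subset_closure

/-- Differentiation under the integral sign over the fundamental domain. -/
lemma deriv_under_integral (b : Module.Basis (Fin 3) ℝ E3) (g g' : ℝ × E3 → ℝ)
    (hg : Continuous g) (hg' : Continuous g')
    (hd : ∀ (x : E3) (t : ℝ), HasDerivAt (fun s => g (s, x)) (g' (t, x)) t) (t0 : ℝ) :
    HasDerivAt (fun t => ∫ x in ZSpan.fundamentalDomain b, g (t, x))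
      (∫ x in ZSpan.fundamentalDomain b, g' (t0, x)) t0 := by
  set D := ZSpan.fundamentalDomain b with hD
  have hDm : MeasurableSet D := ZSpan.fundamentalDomain_measurableSet b
  have hK : IsCompact ((Set.Icc (t0 - 1) (t0 + 1)) ×ˢ closure D) :=
    isCompact_Icc.prod (ZSpan.fundamentalDomain_isBounded b).isCompact_closure
  obtain ⟨C, hC⟩ := hK.exists_bound_of_continuousOn hg'.continuousOn
  have hfin : IsFiniteMeasure (volume.restrict D) := by
    constructor
    rw [Measure.restrict_apply_univ]
    exact lt_of_le_of_lt (measure_mono subset_closure)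
      ((ZSpan.fundamentalDomain_isBounded b).isCompact_closure).measure_lt_top
  refine (hasDerivAt_integral_of_dominated_loc_of_deriv_le (F := fun t x => g (t, x))
    (F' := fun t x => g' (t, x)) (bound := fun _ => C) (ball_mem_nhds t0 one_pos) ?_ ?_ ?_ ?_ ?_ ?_).2
  · exact Filter.Eventually.of_forall fun t =>
      ((hg.comp (continuous_const.prodMk continuous_id)).aestronglyMeasurable)
  · exact integrableOn_fd b _ (hg.comp (continuous_const.prodMk continuous_id))
  · exact ((hg'.comp (continuous_const.prodMk continuous_id)).aestronglyMeasurable)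
  · filter_upwards [ae_restrict_mem hDm] with x hx
    intro t ht
    rw [mem_ball, Real.dist_eq] at ht
    have h1 := abs_le.1 ht.le
    exact hC (t, x) ⟨⟨by linarith [h1.1], by linarith [h1.2]⟩, subset_closure hx⟩
  · exact integrable_const C
  · filter_upwards [ae_restrict_mem hDm] with x hx
    intro t _
    exact hd x t

/-- A nonnegative integrable function on `ℝ` whose second derivative is nonnegative vanishes. -/
lemma convex_nonneg_integrable_eq_zero (A A' A2 : ℝ → ℝ)
    (hA : ∀ t, HasDerivAt A (A' t) t) (hA' : ∀ t, HasDerivAt A' (A2 t) t)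
    (h2 : ∀ t, 0 ≤ A2 t) (h0 : ∀ t, 0 ≤ A t) (hint : Integrable A volume) :
    ∀ t, A t = 0 := by
  intro t0
  by_contra hc
  have hpos : 0 < A t0 := lt_of_le_of_ne (h0 t0) (Ne.symm hc)
  have hdA : ∀ t, deriv A t = A' t := fun t => (hA t).deriv
  have hdA' : ∀ t, deriv A' t = A2 t := fun t => (hA' t).deriv
  have hmono : Monotone A' := by
    apply monotone_of_deriv_nonneg (fun t => (hA' t).differentiableAt)
    intro t; rw [hdA']; exact h2 t
  have key : ∀ s : Set ℝ, volume s = ⊤ → MeasurableSet s → (∀ x ∈ s, A t0 ≤ A x) → False := by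
    intro s hs hms hAs
    have h1 : IntegrableOn (fun _ => A t0) s volume := by
      apply Integrable.mono' (hint.integrableOn) aestronglyMeasurable_const
      filter_upwards [ae_restrict_mem hms] with x hx
      rw [Real.norm_eq_abs, abs_of_pos hpos]
      exact hAs x hx
    rw [integrableOn_const_iff] at h1
    rcases h1 with h | h
    · exact absurd h (by rw [enorm_eq_zero]; exact hpos.ne')
    · rw [hs] at h; exact lt_irrefl _ h
  rcases le_or_gt 0 (A' t0) with hs | hs
  · have hmonoA : MonotoneOn A (Ici t0) := by
      apply monotoneOn_of_deriv_nonneg (convex_Ici t0)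
        (fun t _ => ((hA t).differentiableAt).continuousAt.continuousWithinAt)
        (fun t _ => ((hA t).differentiableAt).differentiableWithinAt)
      intro t ht
      rw [interior_Ici] at ht
      rw [hdA]
      exact hs.trans (hmono ht.le)
    exact key (Ici t0) Real.volume_Ici measurableSet_Ici
      (fun x hx => hmonoA self_mem_Ici hx hx)
  · have hmonoA : AntitoneOn A (Iic t0) := by
      apply antitoneOn_of_deriv_nonpos (convex_Iic t0)
        (fun t _ => ((hA t).differentiableAt).continuousAt.continuousWithinAt)
        (fun t _ => ((hA t).differentiableAt).differentiableWithinAt)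
      intro t ht
      rw [interior_Iic] at ht
      rw [hdA]
      exact (hmono ht.le).trans hs.le
    exact key (Iic t0) Real.volume_Iic measurableSet_Iic
      (fun x hx => hmonoA hx self_mem_Iic hx)

/-- Directional derivative. -/
noncomputable def pd (f : ℝ × E3 → ℝ) (v : ℝ × E3) : ℝ × E3 → ℝ :=
  fun p => fderiv ℝ f p v

/-- Second directional derivative. -/
noncomputable def pd2 (f : ℝ × E3 → ℝ) (v w : ℝ × E3) : ℝ × E3 → ℝ :=
  pd (pd f v) w

noncomputable def ei (i : Fin 3) : E3 := EuclideanSpace.single i 1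

noncomputable def vt3 : ℝ × E3 := (1, 0)

noncomputable def vxi (i : Fin 3) : ℝ × E3 := (0, ei i)

lemma pair_add (t : ℝ) (y v : E3) : ((t, y) : ℝ × E3) + (0, v) = (t, y + v) := by
  simp [Prod.ext_iff]

lemma pd_contDiff {f : ℝ × E3 → ℝ} (hreg : ContDiff ℝ 2 f) (v : ℝ × E3) :
    ContDiff ℝ 1 (pd f v) :=
  (hreg.fderiv_right (by norm_num)).clm_apply contDiff_const

lemma pd_cont {f : ℝ × E3 → ℝ} (hreg : ContDiff ℝ 2 f) (v : ℝ × E3) :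
    Continuous (pd f v) := (pd_contDiff hreg v).continuous

lemma pd_diff {f : ℝ × E3 → ℝ} (hreg : ContDiff ℝ 2 f) (v : ℝ × E3) :
    Differentiable ℝ (pd f v) :=
  (pd_contDiff hreg v).differentiable one_ne_zero

lemma pd2_cont {f : ℝ × E3 → ℝ} (hreg : ContDiff ℝ 2 f) (v w : ℝ × E3) :
    Continuous (pd2 f v w) :=
  (((pd_contDiff hreg v)).continuous_fderiv one_ne_zero).clm_apply continuous_const

lemma slice_t {g : ℝ × E3 → ℝ} (hg : Differentiable ℝ g) (t : ℝ) (x : E3) :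
    HasDerivAt (fun s => g (s, x)) (pd g vt3 (t, x)) t :=
  (hg (t, x)).hasFDerivAt.comp_hasDerivAt t ((hasDerivAt_id t).prodMk (hasDerivAt_const t x))

lemma slice_x {g : ℝ × E3 → ℝ} (hg : Differentiable ℝ g) (t : ℝ) (x : E3) (i : Fin 3) (s : ℝ) :
    HasDerivAt (fun s => g (t, x + s • ei i)) (pd g (vxi i) (t, x + s • ei i)) s := by
  have hc : HasDerivAt (fun s : ℝ => x + s • ei i) (ei i) s := by
    simpa using ((hasDerivAt_id s).smul_const (ei i)).const_add x
  exact (hg (t, x + s • ei i)).hasFDerivAt.comp_hasDerivAt s ((hasDerivAt_const s t).prodMk hc)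

lemma fderiv_periodic_aux {g : ℝ × E3 → ℝ} (hg : Differentiable ℝ g) (c : ℝ × E3)
    (hgc : ∀ p, g (p + c) = g p) (p : ℝ × E3) :
    fderiv ℝ g (p + c) = fderiv ℝ g p := by
  have h1 : HasFDerivAt (fun q : ℝ × E3 => q + c) (ContinuousLinearMap.id ℝ (ℝ × E3)) p := by
    simpa using (hasFDerivAt_id p).add_const c
  have h2 := (hg (p + c)).hasFDerivAt.comp p h1
  rw [show (g ∘ fun q => q + c) = g from funext hgc] at h2
  rw [h2.fderiv, ContinuousLinearMap.comp_id]

end HarmonicAux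

set_option maxHeartbeats 1000000 in
/-- Every harmonic `L²`-function on `ℝ × T³` (with the product Riemannian metric,
`T³ = ℝ³/Λ₃` a flat 3-torus for a lattice `Λ₃ ⊂ ℝ³` spanned by a basis `b`) is identically
zero.  A function on `ℝ × T³` is modelled as a function on `ℝ × ℝ³` invariant under translation
by the lattice `Λ₃ = ℤ-span of b`; harmonicity means that the flat Laplacian (the sum of the
second derivatives in an orthonormal set of directions) vanishes, and the `L²`-condition is
square-integrability on `ℝ × (fundamental domain of Λ₃)`. -/
theorem harmonic_L2_on_R_times_T3_vanishes
    (b : Module.Basis (Fin 3) ℝ (EuclideanSpace ℝ (Fin 3)))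
    (f : ℝ × EuclideanSpace ℝ (Fin 3) → ℝ)
    (hreg : ContDiff ℝ 2 f)
    (hper : ∀ (p : ℝ × EuclideanSpace ℝ (Fin 3)) (n : Fin 3 → ℤ),
      f (p.1, p.2 + ∑ i, n i • b i) = f p)
    (hharm : ∀ p, ∑ μ : Fin 4,
      fderiv ℝ (fun q => fderiv ℝ f q (dir4 μ)) p (dir4 μ) = 0)
    (hL2 : Integrable (fun p => f p ^ 2)
      ((volume : Measure (ℝ × EuclideanSpace ℝ (Fin 3))).restrict
        (Set.univ ×ˢ ZSpan.fundamentalDomain b))) :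
    ∀ p, f p = 0 := by
  classical
  open HarmonicAux Submodule in
  -- basic regularity
  have hfd : Differentiable ℝ f := hreg.differentiable two_ne_zero
  have hfc : Continuous f := hreg.continuous
  set D := ZSpan.fundamentalDomain b with hDdef
  -- periodicity in additive form
  have hperf : ∀ v ∈ span ℤ (Set.range b), ∀ p : ℝ × E3, f (p + (0, v)) = f p := by
    intro v hv p
    obtain ⟨n, hn⟩ := (mem_span_range_iff_exists_fun ℤ).1 hv
    have h1 := hper p n
    rw [hn] at h1
    rwa [show p + ((0 : ℝ), v) = (p.1, p.2 + v) by cases p; exact pair_add _ _ _]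
  have hperd1 : ∀ (w : ℝ × E3), ∀ v ∈ span ℤ (Set.range b), ∀ p : ℝ × E3,
      pd f w (p + (0, v)) = pd f w p := by
    intro w v hv p
    unfold HarmonicAux.pd
    rw [fderiv_periodic_aux hfd (0, v) (hperf v hv) p]
  -- harmonicity in convenient form
  have hharm' : ∀ p : ℝ × E3, pd2 f vt3 vt3 p + pd2 f (vxi 0) (vxi 0) p
      + pd2 f (vxi 1) (vxi 1) p + pd2 f (vxi 2) (vxi 2) p = 0 := by
    intro p
    have h := hharm p
    rw [Fin.sum_univ_four] at h
    have e0 : dir4 0 = vt3 := by simp [dir4, vt3]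
    have e1 : dir4 1 = vxi 0 := by simp [dir4, vxi, ei]
    have e2 : dir4 2 = vxi 1 := by simp [dir4, vxi, ei]
    have e3 : dir4 3 = vxi 2 := by simp [dir4, vxi, ei]
    rw [e0, e1, e2, e3] at h
    exact h
  -- integrability on D of slices
  have hIntD : ∀ (g : ℝ × E3 → ℝ), Continuous g → ∀ t : ℝ,
      IntegrableOn (fun x => g (t, x)) D volume := fun g hg t =>
    integrableOn_fd b _ (hg.comp (continuous_const.prodMk continuous_id))
  -- integration by parts on the torus
  have hIBP : ∀ (t : ℝ) (i : Fin 3),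
      ∫ x in D, (pd f (vxi i) (t, x) * pd f (vxi i) (t, x)
        + f (t, x) * pd2 f (vxi i) (vxi i) (t, x)) = 0 := by
    intro t i
    have hcurve : Continuous fun q : ℝ × E3 => ((t, q.2 + q.1 • ei i) : ℝ × E3) :=
      continuous_const.prodMk (continuous_snd.add (continuous_fst.smul continuous_const))
    have hgc : Continuous fun q : ℝ × E3 =>
        f (t, q.2 + q.1 • ei i) * pd f (vxi i) (t, q.2 + q.1 • ei i) :=
      (hfc.comp hcurve).mul ((pd_cont hreg _).comp hcurve)
    have hgc' : Continuous fun q : ℝ × E3 =>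
        pd f (vxi i) (t, q.2 + q.1 • ei i) * pd f (vxi i) (t, q.2 + q.1 • ei i)
          + f (t, q.2 + q.1 • ei i) * pd2 f (vxi i) (vxi i) (t, q.2 + q.1 • ei i) :=
      (((pd_cont hreg _).comp hcurve).mul ((pd_cont hreg _).comp hcurve)).add
        ((hfc.comp hcurve).mul ((pd2_cont hreg _ _).comp hcurve))
    have hd : ∀ (x : E3) (s : ℝ),
        HasDerivAt (fun u => f (t, x + u • ei i) * pd f (vxi i) (t, x + u • ei i))
          (pd f (vxi i) (t, x + s • ei i) * pd f (vxi i) (t, x + s • ei i)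
            + f (t, x + s • ei i) * pd2 f (vxi i) (vxi i) (t, x + s • ei i)) s := by
      intro x s
      exact (slice_x hfd t x i s).mul (slice_x (pd_diff hreg _) t x i s)
    have hder := deriv_under_integral b
      (fun q => f (t, q.2 + q.1 • ei i) * pd f (vxi i) (t, q.2 + q.1 • ei i))
      (fun q => pd f (vxi i) (t, q.2 + q.1 • ei i) * pd f (vxi i) (t, q.2 + q.1 • ei i)
        + f (t, q.2 + q.1 • ei i) * pd2 f (vxi i) (vxi i) (t, q.2 + q.1 • ei i))
      hgc hgc' hd 0
    have hper0 : ∀ (g : span ℤ (Set.range b)) (y : E3),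
        f (t, (g : E3) + y) * pd f (vxi i) (t, (g : E3) + y)
          = f (t, y) * pd f (vxi i) (t, y) := by
      intro g y
      have h1 : ((t, y) : ℝ × E3) + (0, (g : E3)) = (t, (g : E3) + y) := by
        rw [pair_add, add_comm (g : E3) y]
      rw [← h1, hperf _ (Submodule.coe_mem g) (t, y), hperd1 _ _ (Submodule.coe_mem g) (t, y)]
    have hconst : ∀ s : ℝ,
        (∫ x in D, f (t, x + s • ei i) * pd f (vxi i) (t, x + s • ei i))
          = ∫ x in D, f (t, x) * pd f (vxi i) (t, x) :=
      fun s => integral_fd_add b (fun y => f (t, y) * pd f (vxi i) (t, y)) hper0 (s • ei i)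
    have hfun : (fun s : ℝ => ∫ x in D,
        f (t, x + s • ei i) * pd f (vxi i) (t, x + s • ei i))
          = fun _ => ∫ x in D, f (t, x) * pd f (vxi i) (t, x) := funext fun s => hconst s
    rw [hfun] at hder
    have hzero := hder.unique (hasDerivAt_const 0 _)
    rw [← hzero]
    apply setIntegral_congr_fun (ZSpan.fundamentalDomain_measurableSet b)
    intro x _
    simp [add_comm]
  -- the L² quantities
  have hgA : Continuous fun p : ℝ × E3 => f p ^ 2 := hfc.pow 2
  have hgA' : Continuous fun p : ℝ × E3 => 2 * f p * pd f vt3 p :=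
    (continuous_const.mul hfc).mul (pd_cont hreg _)
  have hgA2 : Continuous fun p : ℝ × E3 =>
      2 * pd f vt3 p * pd f vt3 p + 2 * f p * pd2 f vt3 vt3 p :=
    ((continuous_const.mul (pd_cont hreg _)).mul (pd_cont hreg _)).add
      ((continuous_const.mul hfc).mul (pd2_cont hreg _ _))
  have hA : ∀ t, HasDerivAt (fun t => ∫ x in D, f (t, x) ^ 2)
      (∫ x in D, 2 * f (t, x) * pd f vt3 (t, x)) t := by
    intro t
    exact deriv_under_integral b (fun p => f p ^ 2) (fun p => 2 * f p * pd f vt3 p)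
      hgA hgA' (fun x s => by simpa using (slice_t hfd s x).fun_pow 2) t
  have hA' : ∀ t, HasDerivAt (fun t => ∫ x in D, 2 * f (t, x) * pd f vt3 (t, x))
      (∫ x in D, (2 * pd f vt3 (t, x) * pd f vt3 (t, x)
        + 2 * f (t, x) * pd2 f vt3 vt3 (t, x))) t := by
    intro t
    exact deriv_under_integral b (fun p => 2 * f p * pd f vt3 p)
      (fun p => 2 * pd f vt3 p * pd f vt3 p + 2 * f p * pd2 f vt3 vt3 p)
      hgA' hgA2 (fun x s => ((slice_t hfd s x).const_mul 2).mul (slice_t (pd_diff hreg _) s x)) t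
  -- nonnegativity of the second derivative
  have hA2nonneg : ∀ t, 0 ≤ ∫ x in D, (2 * pd f vt3 (t, x) * pd f vt3 (t, x)
      + 2 * f (t, x) * pd2 f vt3 vt3 (t, x)) := by
    intro t
    have hsplit : (fun x => 2 * pd f vt3 (t, x) * pd f vt3 (t, x)
        + 2 * f (t, x) * pd2 f vt3 vt3 (t, x))
        = fun x => (2 * pd f vt3 (t, x) * pd f vt3 (t, x)
            + 2 * (pd f (vxi 0) (t, x) * pd f (vxi 0) (t, x)
              + pd f (vxi 1) (t, x) * pd f (vxi 1) (t, x)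
              + pd f (vxi 2) (t, x) * pd f (vxi 2) (t, x)))
          + (-2) * ((pd f (vxi 0) (t, x) * pd f (vxi 0) (t, x)
              + f (t, x) * pd2 f (vxi 0) (vxi 0) (t, x))
            + (pd f (vxi 1) (t, x) * pd f (vxi 1) (t, x)
              + f (t, x) * pd2 f (vxi 1) (vxi 1) (t, x))
            + (pd f (vxi 2) (t, x) * pd f (vxi 2) (t, x)
              + f (t, x) * pd2 f (vxi 2) (vxi 2) (t, x))) := by
      funext x
      have hh := hharm' (t, x)
      linear_combination (2 * f (t, x)) * hh
    rw [hsplit]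
    have hint1 : IntegrableOn (fun x => 2 * pd f vt3 (t, x) * pd f vt3 (t, x)
        + 2 * (pd f (vxi 0) (t, x) * pd f (vxi 0) (t, x)
          + pd f (vxi 1) (t, x) * pd f (vxi 1) (t, x)
          + pd f (vxi 2) (t, x) * pd f (vxi 2) (t, x))) D volume :=
      hIntD (fun p => 2 * pd f vt3 p * pd f vt3 p
          + 2 * (pd f (vxi 0) p * pd f (vxi 0) p + pd f (vxi 1) p * pd f (vxi 1) p
            + pd f (vxi 2) p * pd f (vxi 2) p))
        (((continuous_const.mul (pd_cont hreg _)).mul (pd_cont hreg _)).add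
          (continuous_const.mul ((((pd_cont hreg _).mul (pd_cont hreg _)).add
            ((pd_cont hreg _).mul (pd_cont hreg _))).add
            ((pd_cont hreg _).mul (pd_cont hreg _))))) t
    have hQc : ∀ i : Fin 3, Continuous fun p : ℝ × E3 =>
        pd f (vxi i) p * pd f (vxi i) p + f p * pd2 f (vxi i) (vxi i) p := fun i =>
      ((pd_cont hreg _).mul (pd_cont hreg _)).add (hfc.mul (pd2_cont hreg _ _))
    have hint2 : IntegrableOn (fun x => (-2 : ℝ) * ((pd f (vxi 0) (t, x) * pd f (vxi 0) (t, x)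
          + f (t, x) * pd2 f (vxi 0) (vxi 0) (t, x))
        + (pd f (vxi 1) (t, x) * pd f (vxi 1) (t, x)
          + f (t, x) * pd2 f (vxi 1) (vxi 1) (t, x))
        + (pd f (vxi 2) (t, x) * pd f (vxi 2) (t, x)
          + f (t, x) * pd2 f (vxi 2) (vxi 2) (t, x)))) D volume :=
      hIntD (fun p => (-2 : ℝ) * ((pd f (vxi 0) p * pd f (vxi 0) p + f p * pd2 f (vxi 0) (vxi 0) p)
          + (pd f (vxi 1) p * pd f (vxi 1) p + f p * pd2 f (vxi 1) (vxi 1) p)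
          + (pd f (vxi 2) p * pd f (vxi 2) p + f p * pd2 f (vxi 2) (vxi 2) p)))
        (continuous_const.mul (((hQc 0).add (hQc 1)).add (hQc 2))) t
    rw [integral_add hint1 hint2]
    have hzero2 : ∫ x in D, (-2 : ℝ) * ((pd f (vxi 0) (t, x) * pd f (vxi 0) (t, x)
          + f (t, x) * pd2 f (vxi 0) (vxi 0) (t, x))
        + (pd f (vxi 1) (t, x) * pd f (vxi 1) (t, x)
          + f (t, x) * pd2 f (vxi 1) (vxi 1) (t, x))
        + (pd f (vxi 2) (t, x) * pd f (vxi 2) (t, x)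
          + f (t, x) * pd2 f (vxi 2) (vxi 2) (t, x))) = 0 := by
      rw [integral_const_mul]
      have hQi : ∀ i : Fin 3, IntegrableOn (fun x => pd f (vxi i) (t, x) * pd f (vxi i) (t, x)
          + f (t, x) * pd2 f (vxi i) (vxi i) (t, x)) D volume := fun i =>
        hIntD (fun p => pd f (vxi i) p * pd f (vxi i) p + f p * pd2 f (vxi i) (vxi i) p) (hQc i) t
      have h01 : IntegrableOn (fun x => (pd f (vxi 0) (t, x) * pd f (vxi 0) (t, x)
          + f (t, x) * pd2 f (vxi 0) (vxi 0) (t, x))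
          + (pd f (vxi 1) (t, x) * pd f (vxi 1) (t, x)
          + f (t, x) * pd2 f (vxi 1) (vxi 1) (t, x))) D volume := (hQi 0).add (hQi 1)
      rw [integral_add h01 (hQi 2)]
      rw [integral_add (hQi 0) (hQi 1)]
      rw [hIBP t 0, hIBP t 1, hIBP t 2]
      ring
    rw [hzero2, add_zero]
    apply integral_nonneg
    intro x
    have h1 := mul_self_nonneg (pd f vt3 (t, x))
    have h2 := mul_self_nonneg (pd f (vxi 0) (t, x))
    have h3 := mul_self_nonneg (pd f (vxi 1) (t, x))
    have h4 := mul_self_nonneg (pd f (vxi 2) (t, x))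
    simp only [Pi.zero_apply]
    nlinarith
  -- integrability of A
  have hrest : (volume : Measure (ℝ × E3)).restrict (Set.univ ×ˢ D)
      = ((volume : Measure ℝ).prod ((volume : Measure E3).restrict D)) := by
    rw [MeasureTheory.Measure.volume_eq_prod, ← Measure.prod_restrict, Measure.restrict_univ]
  have hL2' : Integrable (fun p => f p ^ 2)
      ((volume : Measure ℝ).prod ((volume : Measure E3).restrict D)) := by
    rwa [hrest] at hL2
  have hintA : Integrable (fun t => ∫ x in D, f (t, x) ^ 2) volume :=
    hL2'.integral_prod_left
  have hAnonneg : ∀ t, 0 ≤ ∫ x in D, f (t, x) ^ 2 := fun t =>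
    integral_nonneg fun x => sq_nonneg _
  -- conclude A ≡ 0
  have hAzero : ∀ t, (∫ x in D, f (t, x) ^ 2) = 0 :=
    convex_nonneg_integrable_eq_zero _ _ _ hA hA' hA2nonneg hAnonneg hintA
  -- hence f² vanishes a.e. on ℝ × D
  have htot : ∫ p, f p ^ 2 ∂((volume : Measure ℝ).prod ((volume : Measure E3).restrict D)) = 0 := by
    rw [MeasureTheory.integral_prod _ hL2']
    simp only [hAzero, integral_zero]
  have hae := (integral_eq_zero_iff_of_nonneg_ae
    (Filter.Eventually.of_forall fun p => sq_nonneg (f p)) hL2').1 htot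
  have hopen : IsOpen {p : ℝ × E3 | f p ≠ 0} :=
    isOpen_compl_singleton.preimage hfc
  have hmeas : MeasurableSet {p : ℝ × E3 | f p ≠ 0} := hopen.measurableSet
  have hnull : ((volume : Measure ℝ).prod ((volume : Measure E3).restrict D))
      {p : ℝ × E3 | f p ≠ 0} = 0 := by
    have h1 : {p : ℝ × E3 | f p ≠ 0} = {p : ℝ × E3 | ¬ (fun p => f p ^ 2) p = (0 : ℝ × E3 → ℝ) p} := by
      ext p
      simp [pow_eq_zero_iff]
    rw [h1]
    exact hae
  have hnull2 : (volume : Measure (ℝ × E3)) ({p : ℝ × E3 | f p ≠ 0} ∩ Set.univ ×ˢ D) = 0 := by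
    rw [← Measure.restrict_apply hmeas, hrest]
    exact hnull
  -- cover {f ≠ 0} by lattice translates of its part in ℝ × D
  have hcover : {p : ℝ × E3 | f p ≠ 0} ⊆ ⋃ n : Fin 3 → ℤ,
      (fun q : ℝ × E3 => ((0 : ℝ), (∑ i, n i • b i : E3)) + q) ''
        ({p : ℝ × E3 | f p ≠ 0} ∩ Set.univ ×ˢ D) := by
    intro p hp
    have hy : ZSpan.fract b p.2 ∈ D := ZSpan.fract_mem_fundamentalDomain b p.2
    have hw : p.2 - ZSpan.fract b p.2 ∈ span ℤ (Set.range b) := by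
      rw [ZSpan.fract_apply, sub_sub_cancel]
      exact Submodule.coe_mem _
    obtain ⟨n, hn⟩ := (mem_span_range_iff_exists_fun ℤ).1 hw
    refine Set.mem_iUnion.2 ⟨n, ⟨(p.1, ZSpan.fract b p.2), ⟨?_, ⟨Set.mem_univ _, hy⟩⟩, ?_⟩⟩
    · show f (p.1, ZSpan.fract b p.2) ≠ 0
      have h1 := hperf _ hw (p.1, ZSpan.fract b p.2)
      rw [pair_add] at h1
      simp only [add_sub_cancel] at h1
      intro hzero
      rw [← h1] at hzero
      exact hp (by simpa using hzero)
    · show ((0 : ℝ), (∑ i, n i • b i : E3)) + (p.1, ZSpan.fract b p.2) = p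
      rw [hn]
      cases p with
      | mk t x => simp [Prod.ext_iff]
  have hZnull : ((volume : Measure ℝ).prod (volume : Measure E3)) {p : ℝ × E3 | f p ≠ 0} = 0 := by
    apply measure_mono_null hcover
    apply measure_iUnion_null
    intro n
    rw [Set.image_add_left]
    rw [measure_preimage_add]
    rw [show ((volume : Measure ℝ).prod (volume : Measure E3))
        = (volume : Measure (ℝ × E3)) from (MeasureTheory.Measure.volume_eq_prod _ _).symm]
    exact hnull2
  have hempty : {p : ℝ × E3 | f p ≠ 0} = ∅ :=
    hopen.eq_empty_of_measure_zero hZnull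
  intro p
  by_contra hfp
  have : p ∈ {p : ℝ × E3 | f p ≠ 0} := hfp
  rw [hempty] at this
  exact this
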